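/- Fix c ≥ 2 and 0 < ε < 1, and suppose κ > 0 satisfies: for every n ≥ 1, κ·R(c)^(1-ε)·c^(2n) < (∏_{(a,b)∈S_n} R(c·a·b))^(2/φ(c^n)), where S_n is the set of coprime pairs (a,b), a<b, a+b=c^n, and N(c,n) counts those pairs with c^n < R(c)^(ε/(1+ε))·R(ab)^(1/(1+ε)). Then for every n, (log κ + n(1-ε)·log c)/(ε·log R(c) + n(1-ε)·log c) < N(c,n)·2/φ(c^n) ≤ 1. -/

import Mathlib

/-- The radical of a natural number: the product of its distinct prime factors. -/
def rad (m : ℕ) : ℕ := ∏ p ∈ m.primeFactors, p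

/-- The set of pairs `(a, b)` with `0 < a < b`, `a + b = c ^ n`, `gcd a b = 1`. -/
def S (c n : ℕ) : Finset (ℕ × ℕ) :=
  (Finset.range (c ^ n) ×ˢ Finset.range (c ^ n)).filter
    (fun p => 0 < p.1 ∧ p.1 < p.2 ∧ p.1 + p.2 = c ^ n ∧ Nat.gcd p.1 p.2 = 1)

/-- The number of pairs in `S c n` satisfying the strong abc inequality for `ε`. -/
noncomputable def Ncount (c n : ℕ) (ε : ℝ) : ℕ :=
  ((S c n).filter (fun p => (c : ℝ) ^ (n : ℝ) <
      (rad c : ℝ) ^ (ε / (1 + ε)) * (rad (p.1 * p.2) : ℝ) ^ (1 / (1 + ε)))).card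


lemma rad_pos (m : ℕ) : 0 < rad m :=
  Finset.prod_pos fun p hp => (Nat.prime_of_mem_primeFactors hp).pos

lemma rad_dvd (m : ℕ) : rad m ∣ m := Nat.prod_primeFactors_dvd m

lemma rad_le {m : ℕ} (hm : 0 < m) : rad m ≤ m := Nat.le_of_dvd hm (rad_dvd m)

lemma two_le_rad {m : ℕ} (hm : 2 ≤ m) : 2 ≤ rad m := by
  obtain ⟨p, hp, hpd⟩ := Nat.exists_prime_and_dvd (by omega : m ≠ 1)
  have hpm : p ∈ m.primeFactors := Nat.mem_primeFactors.mpr ⟨hp, hpd, by omega⟩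
  exact le_trans hp.two_le (Nat.le_of_dvd (rad_pos m) (Finset.dvd_prod_of_mem _ hpm))

lemma rad_mul_dvd {x y : ℕ} (hx : x ≠ 0) (hy : y ≠ 0) : rad (x * y) ∣ rad x * rad y := by
  unfold rad
  rw [Nat.primeFactors_mul hx hy]
  calc ∏ p ∈ x.primeFactors ∪ y.primeFactors, p
      = (∏ p ∈ x.primeFactors, p) * ∏ p ∈ y.primeFactors \ x.primeFactors, p := by
        rw [← Finset.prod_union Finset.disjoint_sdiff, Finset.union_sdiff_self_eq_union]
    _ ∣ (∏ p ∈ x.primeFactors, p) * ∏ p ∈ y.primeFactors, p :=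
        mul_dvd_mul_left _ (Finset.prod_dvd_prod_of_subset _ _ _ Finset.sdiff_subset)

lemma mem_S {c n : ℕ} {p : ℕ × ℕ} : p ∈ S c n ↔
    0 < p.1 ∧ p.1 < p.2 ∧ p.1 + p.2 = c ^ n ∧ Nat.gcd p.1 p.2 = 1 := by
  unfold S
  simp only [Finset.mem_filter, Finset.mem_product, Finset.mem_range]
  constructor
  · tauto
  · intro h; exact ⟨⟨by omega, by omega⟩, h⟩

lemma two_mul_card_S_le (c n : ℕ) : 2 * (S c n).card ≤ (c ^ n).totient := by
  classical
  set T := (Finset.range (c ^ n)).filter ((c ^ n).Coprime) with hT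
  have hinj1 : Set.InjOn Prod.fst ((S c n : Finset (ℕ × ℕ)) : Set (ℕ × ℕ)) := by
    intro p hp q hq h
    rw [Finset.mem_coe, mem_S] at hp hq
    exact Prod.ext h (by omega)
  have hinj2 : Set.InjOn Prod.snd ((S c n : Finset (ℕ × ℕ)) : Set (ℕ × ℕ)) := by
    intro p hp q hq h
    rw [Finset.mem_coe, mem_S] at hp hq
    exact Prod.ext (by omega) h
  have hsub : (S c n).image Prod.fst ∪ (S c n).image Prod.snd ⊆ T := by
    intro k hk
    rw [Finset.mem_union, Finset.mem_image, Finset.mem_image] at hk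
    rw [hT, Finset.mem_filter, Finset.mem_range]
    rcases hk with ⟨p, hp, rfl⟩ | ⟨p, hp, rfl⟩ <;> rw [mem_S] at hp
    · refine ⟨by omega, ?_⟩
      have : Nat.Coprime (p.1 + p.2) p.1 := by
        rw [Nat.add_comm, Nat.coprime_add_self_left, Nat.coprime_comm]
        exact hp.2.2.2
      rwa [hp.2.2.1] at this
    · refine ⟨by omega, ?_⟩
      have : Nat.Coprime (p.1 + p.2) p.2 := by
        rw [Nat.coprime_add_self_left]
        exact hp.2.2.2
      rwa [hp.2.2.1] at this
  have hdisj : Disjoint ((S c n).image Prod.fst) ((S c n).image Prod.snd) := by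
    rw [Finset.disjoint_left]
    intro k hk1 hk2
    rw [Finset.mem_image] at hk1 hk2
    obtain ⟨p, hp, rfl⟩ := hk1
    obtain ⟨q, hq, hqk⟩ := hk2
    rw [mem_S] at hp hq
    omega
  have hcard : ((S c n).image Prod.fst ∪ (S c n).image Prod.snd).card = 2 * (S c n).card := by
    rw [Finset.card_union_of_disjoint hdisj, Finset.card_image_of_injOn hinj1,
      Finset.card_image_of_injOn hinj2]
    ring
  have := Finset.card_le_card hsub
  rw [hcard] at this
  exact this.trans_eq rfl

set_option maxHeartbeats 1000000 in
theorem stmt_7 (c : ℕ) (hc : 2 ≤ c) (ε : ℝ) (hε0 : 0 < ε) (hε1 : ε < 1)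
    (κ : ℝ) (hκ : 0 < κ)
    (hGM : ∀ n : ℕ, 1 ≤ n →
      κ * (rad c : ℝ) ^ (1 - ε) * (c : ℝ) ^ (2 * (n : ℝ)) <
        (∏ p ∈ S c n, (rad (c * p.1 * p.2) : ℝ)) ^ (2 / (Nat.totient (c ^ n) : ℝ))) :
    ∀ n : ℕ, 1 ≤ n →
      (Real.log κ + (n : ℝ) * (1 - ε) * Real.log c) /
          (ε * Real.log (rad c) + (n : ℝ) * (1 - ε) * Real.log c) <
        (Ncount c n ε : ℝ) * 2 / (Nat.totient (c ^ n) : ℝ) ∧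
      (Ncount c n ε : ℝ) * 2 / (Nat.totient (c ^ n) : ℝ) ≤ 1 := by
  intro n hn
  have hc0 : (0:ℝ) < c := by exact_mod_cast (by omega : 0 < c)
  have hcn0 : 0 < c ^ n := pow_pos (by omega) n
  have hφn : 0 < (c ^ n).totient := Nat.totient_pos.mpr hcn0
  set φr : ℝ := ((c ^ n).totient : ℝ) with hφrdef
  have hφr : 0 < φr := by rw [hφrdef]; exact_mod_cast hφn
  have hR2 : 2 ≤ rad c := two_le_rad hc
  have hR0 : (0:ℝ) < (rad c : ℝ) := by exact_mod_cast (rad_pos c)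
  have hlR : 0 < Real.log (rad c) := Real.log_pos (by exact_mod_cast hR2)
  have hlc : 0 < Real.log c := Real.log_pos (by exact_mod_cast hc)
  set lR : ℝ := Real.log (rad c) with hlRdef
  set lc : ℝ := Real.log c with hlcdef
  set A : ℝ := lR + 2 * (n:ℝ) * lc with hAdef
  set B : ℝ := (1 - ε) * lR + (n:ℝ) * (1 + ε) * lc with hBdef
  have h1ε : (0:ℝ) < 1 + ε := by linarith
  have hB0 : 0 ≤ B := by
    have h1 : 0 ≤ (1 - ε) * lR := by nlinarith
    have h2 : 0 ≤ (n:ℝ) * (1 + ε) * lc := by positivity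
    linarith
  -- facts about elements of S
  have hab : ∀ p ∈ S c n, 0 < p.1 ∧ 0 < p.2 ∧ p.1 ≤ c ^ n ∧ p.2 ≤ c ^ n := by
    intro p hp; rw [mem_S] at hp; omega
  have hradpos : ∀ p : ℕ × ℕ, (0:ℝ) < (rad (c * p.1 * p.2) : ℝ) := by
    intro p; exact_mod_cast rad_pos _
  -- bound 1
  have bound1 : ∀ p ∈ S c n, Real.log (rad (c * p.1 * p.2)) ≤ A := by
    intro p hp
    obtain ⟨h1, h2, h3, h4⟩ := hab p hp
    have hdvd : rad (c * (p.1 * p.2)) ∣ rad c * rad (p.1 * p.2) :=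
      rad_mul_dvd (by omega) (Nat.mul_ne_zero (by omega) (by omega))
    have hnat : rad (c * p.1 * p.2) ≤ rad c * (c ^ n * c ^ n) := by
      rw [mul_assoc]
      calc rad (c * (p.1 * p.2)) ≤ rad c * rad (p.1 * p.2) :=
            Nat.le_of_dvd (Nat.mul_pos (rad_pos c) (rad_pos _)) hdvd
        _ ≤ rad c * (p.1 * p.2) :=
            Nat.mul_le_mul_left _ (rad_le (Nat.mul_pos h1 h2))
        _ ≤ rad c * (c ^ n * c ^ n) :=
            Nat.mul_le_mul_left _ (Nat.mul_le_mul h3 h4)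
    have := Real.log_le_log (hradpos p) (Nat.cast_le.mpr hnat)
    calc Real.log (rad (c * p.1 * p.2)) ≤ Real.log ((rad c : ℝ) * ((c:ℝ) ^ n * (c:ℝ) ^ n)) := by
          convert this using 2; push_cast; ring
      _ = A := by
          rw [Real.log_mul (ne_of_gt hR0) (by positivity), Real.log_mul (by positivity)
            (by positivity), Real.log_pow]
          push_cast; ring
  -- bound 2
  have bound2 : ∀ p ∈ S c n,
      ¬ ((c : ℝ) ^ (n : ℝ) <
        (rad c : ℝ) ^ (ε / (1 + ε)) * (rad (p.1 * p.2) : ℝ) ^ (1 / (1 + ε))) →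
      Real.log (rad (c * p.1 * p.2)) ≤ B := by
    intro p hp hnot
    obtain ⟨h1, h2, h3, h4⟩ := hab p hp
    have hrab : (0:ℝ) < (rad (p.1 * p.2) : ℝ) := by exact_mod_cast rad_pos _
    have hle := not_lt.mp hnot
    have hlog := Real.log_le_log (by positivity) hle
    rw [Real.log_mul (by positivity) (by positivity), Real.log_rpow hR0,
      Real.log_rpow hrab, Real.log_rpow hc0] at hlog
    -- hlog : ε/(1+ε) * lR + 1/(1+ε) * log rab ≤ n * lc
    have hkey : ε * lR + Real.log (rad (p.1 * p.2)) ≤ (n:ℝ) * (1 + ε) * lc := by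
      have := mul_le_mul_of_nonneg_left hlog (le_of_lt h1ε)
      have hne : (1:ℝ) + ε ≠ 0 := ne_of_gt h1ε
      field_simp at this
      nlinarith [this]
    have hdvd : rad (c * (p.1 * p.2)) ∣ rad c * rad (p.1 * p.2) :=
      rad_mul_dvd (by omega) (Nat.mul_ne_zero (by omega) (by omega))
    have hnat : rad (c * p.1 * p.2) ≤ rad c * rad (p.1 * p.2) := by
      rw [mul_assoc]; exact Nat.le_of_dvd (Nat.mul_pos (rad_pos c) (rad_pos _)) hdvd
    have hstep := Real.log_le_log (hradpos p) (Nat.cast_le.mpr hnat)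
    push_cast at hstep
    rw [Real.log_mul (ne_of_gt hR0) (ne_of_gt hrab)] at hstep
    have : Real.log (rad (c * p.1 * p.2)) ≤ lR + ((n:ℝ) * (1 + ε) * lc - ε * lR) := by
      linarith
    rw [hBdef]; linarith
  -- sums
  set F := (S c n).filter (fun p => (c : ℝ) ^ (n : ℝ) <
      (rad c : ℝ) ^ (ε / (1 + ε)) * (rad (p.1 * p.2) : ℝ) ^ (1 / (1 + ε))) with hFdef
  set G := (S c n).filter (fun p => ¬ ((c : ℝ) ^ (n : ℝ) <
      (rad c : ℝ) ^ (ε / (1 + ε)) * (rad (p.1 * p.2) : ℝ) ^ (1 / (1 + ε)))) with hGdef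
  have hNF : (Ncount c n ε : ℝ) = (F.card : ℝ) := rfl
  have hcards : F.card + G.card = (S c n).card :=
    Finset.card_filter_add_card_filter_not _
  set N : ℕ := F.card
  set K : ℕ := G.card
  have h2M : 2 * (N + K) ≤ (c ^ n).totient := by
    rw [hcards]; exact two_mul_card_S_le c n
  have hsumF : ∑ p ∈ F, Real.log (rad (c * p.1 * p.2)) ≤ (N:ℝ) * A := by
    have := Finset.sum_le_card_nsmul F (fun p => Real.log (rad (c * p.1 * p.2))) A
      (fun p hp => bound1 p (Finset.mem_of_mem_filter p hp))
    rwa [nsmul_eq_mul] at this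
  have hsumG : ∑ p ∈ G, Real.log (rad (c * p.1 * p.2)) ≤ (K:ℝ) * B := by
    have := Finset.sum_le_card_nsmul G (fun p => Real.log (rad (c * p.1 * p.2))) B
      (fun p hp => by
        rw [hGdef, Finset.mem_filter] at hp
        exact bound2 p hp.1 hp.2)
    rwa [nsmul_eq_mul] at this
  have hsumsplit : ∑ p ∈ S c n, Real.log (rad (c * p.1 * p.2)) =
      (∑ p ∈ F, Real.log (rad (c * p.1 * p.2))) +
      ∑ p ∈ G, Real.log (rad (c * p.1 * p.2)) :=
    (Finset.sum_filter_add_sum_filter_not (S c n) (fun p => (c : ℝ) ^ (n : ℝ) <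
      (rad c : ℝ) ^ (ε / (1 + ε)) * (rad (p.1 * p.2) : ℝ) ^ (1 / (1 + ε))) _).symm
  -- log of hGM
  have hprodpos : (0:ℝ) < ∏ p ∈ S c n, (rad (c * p.1 * p.2) : ℝ) :=
    Finset.prod_pos fun p _ => hradpos p
  have hGMlog := Real.log_lt_log (by positivity) (hGM n hn)
  rw [Real.log_rpow hprodpos, Real.log_mul (by positivity) (by positivity),
    Real.log_mul (ne_of_gt hκ) (by positivity), Real.log_rpow hR0, Real.log_rpow hc0,
    Real.log_prod (fun p _ => ne_of_gt (hradpos p))] at hGMlog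
  -- hGMlog : log κ + (1-ε)*lR + 2*n*lc < 2/φr * ∑ log
  set x : ℝ := (N:ℝ) * 2 / φr with hxdef
  have hxle : 2 * ((N:ℝ) + (K:ℝ)) / φr ≤ 1 := by
    rw [div_le_one hφr, hφrdef]
    exact_mod_cast h2M
  have hx1 : x ≤ 1 := by
    rw [hxdef, div_le_one hφr, hφrdef]
    calc (N:ℝ) * 2 ≤ 2 * ((N:ℝ) + (K:ℝ)) := by nlinarith [Nat.cast_nonneg (α := ℝ) K]
      _ ≤ φr := by rw [hφrdef]; exact_mod_cast h2M
  clear_value F G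
  clear hFdef hGdef
  have hchain : Real.log κ + (1 - ε) * lR + 2 * (n:ℝ) * lc < x * A + (1 - x) * B := by
    have e1 : 2 / φr * ((N:ℝ) * A + (K:ℝ) * B) = x * A + (2 * (K:ℝ) / φr) * B := by
      rw [hxdef]; field_simp
    have e2 : (2 * (K:ℝ) / φr) * B ≤ (1 - x) * B := by
      apply mul_le_mul_of_nonneg_right _ hB0
      have : 2 * (K:ℝ) / φr + x = 2 * ((N:ℝ) + (K:ℝ)) / φr := by
        rw [hxdef]; field_simp; ring
      linarith [hxle, this]
    have e3 : 2 / φr * (∑ p ∈ S c n, Real.log (rad (c * p.1 * p.2))) ≤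
        2 / φr * ((N:ℝ) * A + (K:ℝ) * B) := by
      apply mul_le_mul_of_nonneg_left _ (by positivity)
      rw [hsumsplit]; exact add_le_add hsumF hsumG
    calc Real.log κ + (1 - ε) * lR + 2 * (n:ℝ) * lc
        = Real.log κ + (1 - ε) * lR + 2 * (n:ℝ) * lc := rfl
      _ < 2 / φr * (∑ p ∈ S c n, Real.log (rad (c * p.1 * p.2))) := by linarith [hGMlog]
      _ ≤ x * A + (2 * (K:ℝ) / φr) * B := by rw [← e1]; exact e3
      _ ≤ x * A + (1 - x) * B := by linarith
  constructor
  · have hD : 0 < ε * lR + (n:ℝ) * (1 - ε) * lc := by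
      have hn1 : (1:ℝ) ≤ (n:ℝ) := by exact_mod_cast hn
      have : 0 < (n:ℝ) * (1 - ε) * lc := by
        apply mul_pos (mul_pos (by linarith) (by linarith)) hlc
      nlinarith
    rw [div_lt_iff₀ hD]
    have hAB : x * A - x * B = x * (ε * lR + (n:ℝ) * (1 - ε) * lc) := by
      rw [hAdef, hBdef]; ring
    have hexp : x * A + (1 - x) * B = B + (x * A - x * B) := by ring
    rw [hexp, hAB, hBdef] at hchain
    rw [hNF]
    show Real.log κ + (n:ℝ) * (1 - ε) * lc < (N:ℝ) * 2 / φr * (ε * lR + (n:ℝ) * (1 - ε) * lc)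
    rw [← hxdef]
    linarith
  · rw [hNF]
    show (N:ℝ) * 2 / φr ≤ 1
    rw [← hxdef]; exact hx1
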